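/- Let F_n: X^n → Y^{m_n} be a good random linear code (i.e., max over types P ≠ P_{0^n} and Q of E[S_{XY}(F_n)(P,Q)]/S_{XY}(X^n × Y^{m_n})(P,Q) equals 1) with sup_n n/m_n < ∞. Then there exists a deterministic sample code f_n such that max over P ≠ P_{0^n} and Q of S_{XY}(f_n)(P,Q)/S_{XY}(X^n × Y^{m_n})(P,Q) < (n+1)^{c_1}(m_n+1)^{c_2}, for any constants c_1 > |X| and c_2 > |Y|. -/

import Mathlib

open Finset Filter

open scoped Classical

noncomputable def empDist {X : Type*} [Fintype X] {n : ℕ} (x : Fin n → X) : X → ℝ :=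
  fun a => ((univ.filter fun i => x i = a).card : ℝ) / n

noncomputable def specS {X : Type*} [Fintype X] {n : ℕ}
    (A : Finset (Fin n → X)) (P : X → ℝ) : ℝ :=
  ((A.filter fun x => empDist x = P).card : ℝ) / (A.card : ℝ)

noncomputable def jointSpec {X Y : Type*} [Fintype X] [Fintype Y] {n m : ℕ}
    (f : (Fin n → X) → (Fin m → Y)) (P : X → ℝ) (Q : Y → ℝ) : ℝ :=
  ((univ.filter fun x : Fin n → X => empDist x = P ∧ empDist (f x) = Q).card : ℝ) /
    ((Fintype.card X : ℝ) ^ n)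

noncomputable def fullJointSpec (X Y : Type*) [Fintype X] [Fintype Y] (n m : ℕ)
    (P : X → ℝ) (Q : Y → ℝ) : ℝ :=
  specS (univ : Finset (Fin n → X)) P * specS (univ : Finset (Fin m → Y)) Q

noncomputable def alphaE {X Y : Type*} [Fintype X] [Fintype Y] {n m : ℕ} {Ω : Type*}
    [Fintype Ω] (μ : Ω → ℝ) (F : Ω → (Fin n → X) → (Fin m → Y))
    (P : X → ℝ) (Q : Y → ℝ) : ℝ :=
  (∑ ω, μ ω * jointSpec (F ω) P Q) / fullJointSpec X Y n m P Q

def permAct {X : Type*} {n : ℕ} (σ : Equiv.Perm (Fin n)) (x : Fin n → X) : Fin n → X :=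
  fun i => x (σ.symm i)

noncomputable def entH {X : Type*} [Fintype X] (P : X → ℝ) : ℝ :=
  ∑ a, -(P a * Real.log (P a))

noncomputable def binEnt (x : ℝ) : ℝ := -(x * Real.log x) - (1 - x) * Real.log (1 - x)

lemma card_image_empDist (X : Type*) [Fintype X] (n : ℕ) :
    ((univ : Finset (Fin n → X)).image (empDist)).card ≤ (n+1)^(Fintype.card X) := by
  rcases Nat.eq_zero_or_pos n with h0 | hn
  · subst h0
    calc _ ≤ (univ : Finset (Fin 0 → X)).card := Finset.card_image_le
    _ = 1 := by simp
    _ ≤ _ := Nat.one_le_pow _ _ (by omega)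
  · classical
    have key : ∀ x : Fin n → X, ∀ a : X,
        empDist x a = ((min ⌊empDist x a * n⌋₊ n : ℕ) : ℝ) / n := by
      intro x a
      set c := (univ.filter fun i => x i = a).card with hc
      have hcn : c ≤ n := by
        have := Finset.card_filter_le (univ : Finset (Fin n)) (fun i => x i = a)
        simpa using this
      have h1 : empDist x a = (c : ℝ) / n := rfl
      have hn' : (n : ℝ) ≠ 0 := Nat.cast_ne_zero.mpr hn.ne'
      have h2 : empDist x a * n = (c : ℝ) := by
        rw [h1]; field_simp
      rw [h2, Nat.floor_natCast, min_eq_left hcn, h1]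
    have := Finset.card_le_card_of_injOn
      (f := fun P : X → ℝ => fun a : X => (⟨min ⌊P a * n⌋₊ n, by omega⟩ : Fin (n+1)))
      (s := (univ : Finset (Fin n → X)).image empDist)
      (t := (univ : Finset (X → Fin (n+1))))
      (fun _ _ => Finset.mem_univ _)
      (by
        intro P hP P' hP' hPP'
        simp only [Finset.mem_coe, Finset.mem_image] at hP hP'
        obtain ⟨x, _, rfl⟩ := hP
        obtain ⟨x', _, rfl⟩ := hP'
        funext a
        have := congrFun hPP' a
        rw [key x a, key x' a]
        simp only [Fin.mk.injEq] at this
        rw [this])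
    simpa using this

lemma empDist_ne_of_ne_zero {X : Type*} [Fintype X] [AddCommGroup X] {n : ℕ} (hn : 0 < n)
    (x : Fin n → X) (hx : x ≠ 0) : empDist x ≠ empDist (0 : Fin n → X) := by
  obtain ⟨i, hi⟩ : ∃ i, x i ≠ 0 := by
    by_contra h
    push_neg at h
    exact hx (funext h)
  intro h
  have h1 := congrFun h (x i)
  have hpos : (0 : ℝ) < empDist x (x i) := by
    unfold empDist
    apply div_pos
    · have : i ∈ univ.filter fun j => x j = x i := by simp
      exact_mod_cast Nat.cast_pos.mpr (Finset.card_pos.mpr ⟨i, this⟩)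
    · exact_mod_cast hn
  have h0 : empDist (0 : Fin n → X) (x i) = 0 := by
    unfold empDist
    have : (univ.filter fun j : Fin n => (0 : Fin n → X) j = x i) = ∅ := by
      ext j; simpa [Ne.symm hi] using fun (h' : (0 : X) = x i) => hi h'.symm
    rw [this]; simp
  rw [h1, h0] at hpos
  exact lt_irrefl _ hpos

lemma jointSpec_nonneg {X Y : Type*} [Fintype X] [Fintype Y] {n m : ℕ}
    (f : (Fin n → X) → (Fin m → Y)) (P : X → ℝ) (Q : Y → ℝ) :
    0 ≤ jointSpec f P Q := by
  unfold jointSpec; positivity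

lemma fullJointSpec_nonneg (X Y : Type*) [Fintype X] [Fintype Y] (n m : ℕ)
    (P : X → ℝ) (Q : Y → ℝ) : 0 ≤ fullJointSpec X Y n m P Q := by
  unfold fullJointSpec specS; positivity

lemma markov_union {Ω : Type*} [Fintype Ω] (μ : Ω → ℝ) (hμ0 : ∀ ω, 0 ≤ μ ω)
    (hμ1 : ∑ ω, μ ω = 1) {ι : Type*} (s : Finset ι) (g : Ω → ι → ℝ)
    (hg : ∀ ω i, 0 ≤ g ω i) (hsum : ∀ i ∈ s, ∑ ω, μ ω * g ω i ≤ 1)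
    (T : ℝ) (hT : (s.card : ℝ) < T) :
    ∃ ω, 0 < μ ω ∧ ∀ i ∈ s, g ω i < T := by
  classical
  by_contra hcon
  push_neg at hcon
  have hwit : ∀ ω, 0 < μ ω → T ≤ ∑ i ∈ s, g ω i := by
    intro ω hω
    obtain ⟨i, hi, hgi⟩ := hcon ω hω
    exact le_trans hgi (Finset.single_le_sum (fun j _ => hg ω j) hi)
  have hmain : T ≤ (s.card : ℝ) := by
    have h1 : T = ∑ ω, μ ω * T := by rw [← Finset.sum_mul, hμ1, one_mul]
    calc T = ∑ ω, μ ω * T := h1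
    _ ≤ ∑ ω, μ ω * ∑ i ∈ s, g ω i := by
        apply Finset.sum_le_sum
        intro ω _
        rcases eq_or_lt_of_le (hμ0 ω) with h0 | hpos
        · rw [← h0]; simp
        · exact mul_le_mul_of_nonneg_left (hwit ω hpos) (hμ0 ω)
    _ = ∑ i ∈ s, ∑ ω, μ ω * g ω i := by
        rw [Finset.sum_comm]
        exact Finset.sum_congr rfl fun ω _ => Finset.mul_sum _ _ _
    _ ≤ ∑ i ∈ s, (1 : ℝ) := Finset.sum_le_sum hsum
    _ = (s.card : ℝ) := by simp
  exact absurd hT (not_lt.mpr hmain)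

theorem stmt13 {X Y : Type*} [Fintype X] [Fintype Y] [AddCommGroup X] [AddCommGroup Y]
    {n m : ℕ} (hn : 0 < n)
    {Ω : Type*} [Fintype Ω] (μ : Ω → ℝ) (hμ0 : ∀ ω, 0 ≤ μ ω) (hμ1 : ∑ ω, μ ω = 1)
    (F : Ω → ((Fin n → X) →+ (Fin m → Y)))
    (hgood : ∀ x : Fin n → X, x ≠ 0 → ∀ y : Fin m → Y,
      alphaE μ (fun ω => ⇑(F ω)) (empDist x) (empDist y) ≤ 1)
    (c₁ c₂ : ℝ) (hc₁ : (Fintype.card X : ℝ) < c₁) (hc₂ : (Fintype.card Y : ℝ) < c₂) :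
    ∃ ω, 0 < μ ω ∧ ∀ x : Fin n → X, x ≠ 0 → ∀ y : Fin m → Y,
      jointSpec (⇑(F ω)) (empDist x) (empDist y) /
          fullJointSpec X Y n m (empDist x) (empDist y)
        < ((n : ℝ) + 1) ^ c₁ * ((m : ℝ) + 1) ^ c₂ := by
  classical
  -- the type sets
  have hn1 : (1 : ℝ) < (n : ℝ) + 1 := by
    have : (1 : ℝ) ≤ (n : ℝ) := by exact_mod_cast hn
    linarith
  have hm1 : (1 : ℝ) ≤ (m : ℝ) + 1 := by
    have : (0 : ℝ) ≤ (m : ℝ) := Nat.cast_nonneg m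
    linarith
  set PS : Finset (X → ℝ) :=
    ((univ : Finset (Fin n → X)).image empDist).filter
      (fun P => P ≠ empDist (0 : Fin n → X)) with hPS
  set QS : Finset (Y → ℝ) := (univ : Finset (Fin m → Y)).image empDist with hQS
  -- count of pairs is strictly below the threshold
  have hcard : ((PS ×ˢ QS).card : ℝ) < ((n : ℝ) + 1) ^ c₁ * ((m : ℝ) + 1) ^ c₂ := by
    have h1 : (PS ×ˢ QS).card ≤ (n+1)^(Fintype.card X) * (m+1)^(Fintype.card Y) := by
      rw [Finset.card_product]
      exact Nat.mul_le_mul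
        (le_trans (Finset.card_filter_le _ _) (card_image_empDist X n))
        (card_image_empDist Y m)
    have h2 : ((PS ×ˢ QS).card : ℝ)
        ≤ ((n : ℝ) + 1) ^ (Fintype.card X : ℕ) * ((m : ℝ) + 1) ^ (Fintype.card Y : ℕ) := by
      calc ((PS ×ˢ QS).card : ℝ)
          ≤ (((n+1)^(Fintype.card X) * (m+1)^(Fintype.card Y) : ℕ) : ℝ) := by
            exact_mod_cast h1
      _ = _ := by push_cast; ring
    refine lt_of_le_of_lt h2 ?_
    have hx : ((n : ℝ) + 1) ^ (Fintype.card X : ℕ) < ((n : ℝ) + 1) ^ c₁ := by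
      rw [← Real.rpow_natCast ((n : ℝ) + 1) (Fintype.card X)]
      exact Real.rpow_lt_rpow_of_exponent_lt hn1 hc₁
    have hy : ((m : ℝ) + 1) ^ (Fintype.card Y : ℕ) ≤ ((m : ℝ) + 1) ^ c₂ := by
      rw [← Real.rpow_natCast ((m : ℝ) + 1) (Fintype.card Y)]
      exact Real.rpow_le_rpow_of_exponent_le hm1 (le_of_lt hc₂)
    have hxpos : (0:ℝ) < ((n : ℝ) + 1) ^ (Fintype.card X : ℕ) := by positivity
    have hypos : (0:ℝ) < ((m : ℝ) + 1) ^ (Fintype.card Y : ℕ) := by positivity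
    calc ((n : ℝ) + 1) ^ (Fintype.card X : ℕ) * ((m : ℝ) + 1) ^ (Fintype.card Y : ℕ)
        ≤ ((n : ℝ) + 1) ^ (Fintype.card X : ℕ) * ((m : ℝ) + 1) ^ c₂ :=
          mul_le_mul_of_nonneg_left hy (le_of_lt hxpos)
    _ < ((n : ℝ) + 1) ^ c₁ * ((m : ℝ) + 1) ^ c₂ := by
          apply mul_lt_mul_of_pos_right hx
          positivity
  -- the per-pair expectation bound
  have hsum : ∀ pq ∈ PS ×ˢ QS,
      ∑ ω, μ ω * (jointSpec (⇑(F ω)) pq.1 pq.2 / fullJointSpec X Y n m pq.1 pq.2) ≤ 1 := by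
    rintro ⟨P, Q⟩ hpq
    rw [Finset.mem_product] at hpq
    obtain ⟨hP, hQ⟩ := hpq
    rw [hPS, Finset.mem_filter, Finset.mem_image] at hP
    obtain ⟨⟨x, -, rfl⟩, hPne⟩ := hP
    rw [hQS, Finset.mem_image] at hQ
    obtain ⟨y, -, rfl⟩ := hQ
    have hx : x ≠ 0 := by
      rintro rfl
      exact hPne rfl
    rcases eq_or_lt_of_le (fullJointSpec_nonneg X Y n m (empDist x) (empDist y)) with h0 | hpos
    · have : ∀ ω, μ ω * (jointSpec (⇑(F ω)) (empDist x) (empDist y)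
          / fullJointSpec X Y n m (empDist x) (empDist y)) = 0 := by
        intro ω
        rw [← h0, div_zero, mul_zero]
      rw [Finset.sum_congr rfl (fun ω _ => this ω)]
      simp
    · have hg := hgood x hx y
      unfold alphaE at hg
      have heq : ∑ ω, μ ω * (jointSpec (⇑(F ω)) (empDist x) (empDist y)
            / fullJointSpec X Y n m (empDist x) (empDist y))
          = (∑ ω, μ ω * jointSpec (⇑(F ω)) (empDist x) (empDist y))
            / fullJointSpec X Y n m (empDist x) (empDist y) := by
        rw [Finset.sum_div]
        exact Finset.sum_congr rfl fun ω _ => (mul_div_assoc _ _ _).symm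
      rw [heq]
      exact hg
  -- apply the union bound
  obtain ⟨ω, hω, hall⟩ := markov_union μ hμ0 hμ1 (PS ×ˢ QS)
    (fun ω pq => jointSpec (⇑(F ω)) pq.1 pq.2 / fullJointSpec X Y n m pq.1 pq.2)
    (fun ω pq => div_nonneg (jointSpec_nonneg _ _ _) (fullJointSpec_nonneg _ _ _ _ _ _))
    hsum _ hcard
  refine ⟨ω, hω, ?_⟩
  intro x hx y
  have hmem : (empDist x, empDist y) ∈ PS ×ˢ QS := by
    rw [Finset.mem_product]
    constructor
    · rw [hPS, Finset.mem_filter]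
      exact ⟨Finset.mem_image_of_mem _ (Finset.mem_univ x),
        empDist_ne_of_ne_zero hn x hx⟩
    · exact Finset.mem_image_of_mem _ (Finset.mem_univ y)
  simpa using hall (empDist x, empDist y) hmem
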